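/- Let n ≥ 1 and μ₁,…,μₙ ∈ ℝ. Let ṽ₁,…,ṽₙ : ℝ → SO⁺(2,1) and x̃₁,…,x̃ₙ : ℝ → ℝ³ be differentiable one-parameter families. Define ũᵢ(ε) = ṽᵢ(ε)·exp(−μᵢM(e₀))·ṽᵢ(ε)⁻¹, j̃ᵢ(ε) = (1 − ũᵢ(ε)⁻¹)·x̃ᵢ(ε), and the ordered products Uᵢ = ũᵢ·ũᵢ₋₁···ũ₁ with U₀ = 1. Then at every parameter value ε one has Σᵢ₌₁ⁿ η( m( U′ᵢ₋₁Uᵢ₋₁⁻¹ − ṽ′ᵢṽᵢ⁻¹ ), j̃ᵢ ) = Σᵢ₌₁ⁿ η( m( U′ᵢ₋₁Uᵢ₋₁⁻¹ − U′ᵢUᵢ⁻¹ ), x̃ᵢ ), where primes denote derivatives with respect to ε. (Part 1 of Lemma 6.1: for genus 0 and n spinless particles the symplectic potential one-form Θ takes the form (6.4) in the variables ũ_{Mᵢ}, x̃_{Mᵢ}.) -/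

import Mathlib

open Matrix

noncomputable section

attribute [local instance] Matrix.normedAddCommGroup Matrix.normedSpace

/-- The Minkowski metric matrix diag(1,-1,-1). -/
def η3 : Matrix (Fin 3) (Fin 3) ℝ := Matrix.diagonal ![1, -1, -1]

/-- The Minkowski bilinear form on ℝ³. -/
def mink (x y : Fin 3 → ℝ) : ℝ := x 0 * y 0 - x 1 * y 1 - x 2 * y 2

/-- The Minkowski cross product. -/
def crossM (p q : Fin 3 → ℝ) : Fin 3 → ℝ :=
  ![p 1 * q 2 - p 2 * q 1, p 0 * q 2 - p 2 * q 0, p 1 * q 0 - p 0 * q 1]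

/-- The map M : ℝ³ → so(2,1), M(p)q = p ×_η q. -/
def Mmap (p : Fin 3 → ℝ) : Matrix (Fin 3) (Fin 3) ℝ :=
  !![0, -(p 2), p 1; -(p 2), 0, p 0; p 1, -(p 0), 0]

/-- The inverse m : so(2,1) → ℝ³ of M (extracted entrywise). -/
def mser (X : Matrix (Fin 3) (Fin 3) ℝ) : Fin 3 → ℝ := ![X 1 2, X 0 2, -(X 0 1)]

/-- Membership in SO⁺(2,1). -/
def IsSOplus (v : Matrix (Fin 3) (Fin 3) ℝ) : Prop :=
  vᵀ * η3 * v = η3 ∧ v.det = 1 ∧ 0 < v 0 0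

/-- so(2,1) as a set of 3×3 matrices. -/
def IsSO21 (X : Matrix (Fin 3) (Fin 3) ℝ) : Prop := Xᵀ * η3 + η3 * X = 0

/-- The 4×4 Poincaré matrix [[v,x],[0,1]]. -/
def pmat (v : Matrix (Fin 3) (Fin 3) ℝ) (x : Fin 3 → ℝ) : Matrix (Fin 4) (Fin 4) ℝ :=
  Matrix.of fun i j =>
    if hi : (i : ℕ) < 3 then
      if hj : (j : ℕ) < 3 then v ⟨i, hi⟩ ⟨j, hj⟩ else x ⟨i, hi⟩
    else if (j : ℕ) < 3 then 0 else 1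

/-- The 4×4 iso(2,1) matrix [[X,b],[0,0]]. -/
def amat (X : Matrix (Fin 3) (Fin 3) ℝ) (b : Fin 3 → ℝ) : Matrix (Fin 4) (Fin 4) ℝ :=
  Matrix.of fun i j =>
    if hi : (i : ℕ) < 3 then
      if hj : (j : ℕ) < 3 then X ⟨i, hi⟩ ⟨j, hj⟩ else b ⟨i, hi⟩
    else 0

/-- Membership in the Poincaré group ISO⁺(2,1) ⊂ GL₄(ℝ). -/
def IsISO (g : Matrix (Fin 4) (Fin 4) ℝ) : Prop :=
  ∃ v x, IsSOplus v ∧ g = pmat v x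

/-- Membership in the Lie algebra iso(2,1). -/
def IsISOAlg (ξ : Matrix (Fin 4) (Fin 4) ℝ) : Prop :=
  ∃ X b, IsSO21 X ∧ ξ = amat X b

/-- Standard basis vectors of ℝ³. -/
def e3 (a : Fin 3) : Fin 3 → ℝ := Pi.single a 1

/-- The rotation/boost generators Ĵ_a of iso(2,1). -/
def Jhat (a : Fin 3) : Matrix (Fin 4) (Fin 4) ℝ := amat (Mmap (e3 a)) 0

/-- The translation generators P̂_a of iso(2,1). -/
def Phat (a : Fin 3) : Matrix (Fin 4) (Fin 4) ℝ := amat 0 (e3 a)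

/-- The invariant pairing ⟨[[X,b],0],[[Y,c],0]⟩ = η(m X, c) + η(m Y, b) on iso(2,1). -/
def pairIso (ξ ζ : Matrix (Fin 4) (Fin 4) ℝ) : ℝ :=
  mink ![ξ 1 2, ξ 0 2, -(ξ 0 1)] ![ζ 0 3, ζ 1 3, ζ 2 3]
  + mink ![ζ 1 2, ζ 0 2, -(ζ 0 1)] ![ξ 0 3, ξ 1 3, ξ 2 3]

/-- Ordered product U_k(ε) = u_{k-1}(ε)⋯u_0(ε) (with U_0 = 1). -/
def ordProd {n : ℕ} (u : ℕ → ℝ → Matrix (Fin n) (Fin n) ℝ) : ℕ → ℝ → Matrix (Fin n) (Fin n) ℝ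
  | 0 => fun _ => 1
  | k + 1 => fun ε => u k ε * ordProd u k ε

/-! ### Auxiliary lemmas -/

abbrev Mat3 := Matrix (Fin 3) (Fin 3) ℝ

lemma η3_mul_η3 : η3 * η3 = 1 := by
  ext i j; fin_cases i <;> fin_cases j <;>
    simp [η3, Matrix.mul_apply, Fin.sum_univ_three, Matrix.one_apply]

lemma η3_transpose : η3ᵀ = η3 := by simp [η3]

/-- A convenient predicate: Lorentz with determinant one. -/
def Lor (A : Mat3) : Prop := Aᵀ * η3 * A = η3 ∧ A.det = 1

lemma Lor.inv_eq {A : Mat3} (h : Lor A) : A⁻¹ = η3 * Aᵀ * η3 := by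
  apply Matrix.inv_eq_left_inv
  calc η3 * Aᵀ * η3 * A = η3 * (Aᵀ * η3 * A) := by noncomm_ring
    _ = 1 := by rw [h.1, η3_mul_η3]

lemma Lor.mul_inv {A : Mat3} (h : Lor A) : A * A⁻¹ = 1 :=
  Matrix.mul_nonsing_inv A (by rw [h.2]; exact isUnit_one)

lemma Lor.inv_mul {A : Mat3} (h : Lor A) : A⁻¹ * A = 1 :=
  Matrix.nonsing_inv_mul A (by rw [h.2]; exact isUnit_one)

lemma Lor.flip {A : Mat3} (h : Lor A) : A * η3 * Aᵀ = η3 := by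
  have hT : Aᵀ = η3 * A⁻¹ * η3 := by
    rw [h.inv_eq]
    calc Aᵀ = (η3 * η3) * Aᵀ * (η3 * η3) := by rw [η3_mul_η3]; noncomm_ring
      _ = η3 * (η3 * Aᵀ * η3) * η3 := by noncomm_ring
  rw [hT]
  calc A * η3 * (η3 * A⁻¹ * η3) = A * (η3 * η3) * A⁻¹ * η3 := by noncomm_ring
    _ = η3 := by rw [η3_mul_η3, Matrix.mul_one, h.mul_inv, Matrix.one_mul]

lemma Lor.mul {A B : Mat3} (hA : Lor A) (hB : Lor B) : Lor (A * B) := by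
  constructor
  · rw [Matrix.transpose_mul]
    calc Bᵀ * Aᵀ * η3 * (A * B) = Bᵀ * (Aᵀ * η3 * A) * B := by noncomm_ring
      _ = η3 := by rw [hA.1]; exact hB.1
  · rw [Matrix.det_mul, hA.2, hB.2, one_mul]

lemma Lor.one : Lor (1 : Mat3) := by constructor <;> simp

lemma Lor.inv {A : Mat3} (h : Lor A) : Lor A⁻¹ := by
  constructor
  · rw [h.inv_eq]
    have hTT : (η3 * Aᵀ * η3)ᵀ = η3 * A * η3 := by
      simp [Matrix.transpose_mul, η3_transpose, Matrix.mul_assoc]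
    rw [hTT]
    calc η3 * A * η3 * η3 * (η3 * Aᵀ * η3)
        = η3 * A * (η3 * η3) * (η3 * Aᵀ) * η3 := by noncomm_ring
      _ = η3 * (A * η3 * Aᵀ) * η3 := by rw [η3_mul_η3]; noncomm_ring
      _ = η3 := by rw [h.flip, η3_mul_η3, Matrix.one_mul]
  · rw [Matrix.det_nonsing_inv, h.2]; simp

/-! #### Derivatives of matrix-valued functions, entrywise -/

lemma hasDerivAt_entry {f : ℝ → Mat3} {f' : Mat3} {t : ℝ} (h : HasDerivAt f f' t) (i j : Fin 3) :
    HasDerivAt (fun s => f s i j) (f' i j) t :=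
  (hasDerivAt_pi.mp ((hasDerivAt_pi.mp h) i)) j

lemma hasDerivAt_of_entries {f : ℝ → Mat3} {f' : Mat3} {t : ℝ}
    (h : ∀ i j, HasDerivAt (fun s => f s i j) (f' i j) t) :
    HasDerivAt f f' t :=
  hasDerivAt_pi.mpr fun i => hasDerivAt_pi.mpr (h i)

lemma HasDerivAt.matMul {f g : ℝ → Mat3} {f' g' : Mat3} {t : ℝ}
    (hf : HasDerivAt f f' t) (hg : HasDerivAt g g' t) :
    HasDerivAt (fun s => f s * g s) (f' * g t + f t * g') t := by
  apply hasDerivAt_of_entries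
  intro i j
  simp only [Matrix.mul_apply, Matrix.add_apply]
  have h : HasDerivAt (fun s => ∑ k : Fin 3, f s i k * g s k j)
      (∑ k : Fin 3, (f' i k * g t k j + f t i k * g' k j)) t := by
    apply HasDerivAt.fun_sum
    intro k _
    exact (hasDerivAt_entry hf i k).mul (hasDerivAt_entry hg k j)
  simpa [Finset.sum_add_distrib] using h

lemma HasDerivAt.matTranspose {f : ℝ → Mat3} {f' : Mat3} {t : ℝ} (hf : HasDerivAt f f' t) :
    HasDerivAt (fun s => (f s)ᵀ) f'ᵀ t := by
  apply hasDerivAt_of_entries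
  intro i j
  simpa [Matrix.transpose_apply] using hasDerivAt_entry hf j i

lemma Differentiable.matMul {f g : ℝ → Mat3} (hf : Differentiable ℝ f)
    (hg : Differentiable ℝ g) : Differentiable ℝ (fun s => f s * g s) := fun t =>
  (((hf t).hasDerivAt).matMul ((hg t).hasDerivAt)).differentiableAt

/-- Derivative of the inverse of a Lorentz-valued family. -/
lemma hasDerivAt_lorInv {f : ℝ → Mat3} {f' : Mat3} {ε : ℝ}
    (hl : ∀ t, Lor (f t)) (hf : HasDerivAt f f' ε) :
    HasDerivAt (fun t => (f t)⁻¹) (-((f ε)⁻¹ * f' * (f ε)⁻¹)) ε := by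
  have key : (fun t => (f t)⁻¹) = fun t => η3 * (f t)ᵀ * η3 := funext fun t => (hl t).inv_eq
  have h1 : HasDerivAt (fun t => η3 * (f t)ᵀ * η3) (η3 * f'ᵀ * η3) ε := by
    have := ((hasDerivAt_const ε η3).matMul hf.matTranspose).matMul (hasDerivAt_const ε η3)
    simpa using this
  have h2 : HasDerivAt (fun t => (f t)⁻¹) (η3 * f'ᵀ * η3) ε := key ▸ h1
  have h3 : HasDerivAt (fun t => f t * (f t)⁻¹) (f' * (f ε)⁻¹ + f ε * (η3 * f'ᵀ * η3)) ε :=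
    hf.matMul h2
  have h4 : HasDerivAt (fun t => f t * (f t)⁻¹) 0 ε := by
    have he : (fun t => f t * (f t)⁻¹) = fun _ => (1 : Mat3) := funext fun t => (hl t).mul_inv
    rw [he]; exact hasDerivAt_const _ _
  have h5 := h3.unique h4
  have e1 : f ε * (η3 * f'ᵀ * η3) = -(f' * (f ε)⁻¹) := eq_neg_of_add_eq_zero_right h5
  have e2 : η3 * f'ᵀ * η3 = -((f ε)⁻¹ * f' * (f ε)⁻¹) := by
    calc η3 * f'ᵀ * η3 = (f ε)⁻¹ * (f ε * (η3 * f'ᵀ * η3)) := by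
          rw [← Matrix.mul_assoc, (hl ε).inv_mul, Matrix.one_mul]
      _ = (f ε)⁻¹ * -(f' * (f ε)⁻¹) := by rw [e1]
      _ = -((f ε)⁻¹ * f' * (f ε)⁻¹) := by rw [Matrix.mul_neg, Matrix.mul_assoc]
  exact e2 ▸ h2

/-- The logarithmic derivative of a Lorentz family lies in so(2,1). -/
lemma so21_logDeriv {f : ℝ → Mat3} {f' : Mat3} {ε : ℝ}
    (hl : ∀ t, Lor (f t)) (hf : HasDerivAt f f' ε) :
    IsSO21 (f' * (f ε)⁻¹) := by
  have h1 : HasDerivAt (fun t => f t * η3 * (f t)ᵀ)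
      (f' * η3 * (f ε)ᵀ + (f ε * η3) * f'ᵀ) ε := by
    have := (hf.matMul (hasDerivAt_const ε η3)).matMul hf.matTranspose
    simpa using this
  have h2 : HasDerivAt (fun t => f t * η3 * (f t)ᵀ) 0 ε := by
    have he : (fun t => f t * η3 * (f t)ᵀ) = fun _ => η3 := funext fun t => (hl t).flip
    rw [he]; exact hasDerivAt_const _ _
  have hS : f' * η3 * (f ε)ᵀ + (f ε * η3) * f'ᵀ = 0 := h1.unique h2
  unfold IsSO21
  rw [(hl ε).inv_eq]
  have hTT : (f' * (η3 * (f ε)ᵀ * η3))ᵀ = η3 * f ε * η3 * f'ᵀ := by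
    simp [Matrix.transpose_mul, η3_transpose, Matrix.mul_assoc]
  rw [hTT]
  have hswap : f ε * η3 * f'ᵀ + f' * η3 * (f ε)ᵀ = 0 := by rw [add_comm]; exact hS
  calc η3 * f ε * η3 * f'ᵀ * η3 + η3 * (f' * (η3 * (f ε)ᵀ * η3))
      = η3 * (f ε * η3 * f'ᵀ + f' * η3 * (f ε)ᵀ) * η3 := by noncomm_ring
    _ = 0 := by rw [hswap]; simp

/-! #### so(2,1) structure and the pairing -/

lemma so21_eq_Mmap {C : Mat3} (h : IsSO21 C) : C = Mmap (mser C) := by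
  have h' : ∀ i j, (Cᵀ * η3 + η3 * C) i j = 0 := fun i j => by rw [h]; rfl
  simp only [Matrix.add_apply, Matrix.mul_apply, Matrix.transpose_apply, η3,
    Matrix.diagonal, Fin.sum_univ_three, Matrix.of_apply] at h'
  have h00 := h' 0 0; have h01 := h' 0 1; have h02 := h' 0 2
  have h11 := h' 1 1; have h12 := h' 1 2; have h22 := h' 2 2
  have h10 := h' 1 0; have h20 := h' 2 0; have h21 := h' 2 1
  simp at h00 h01 h02 h10 h11 h12 h20 h21 h22
  ext i j
  fin_cases i <;> fin_cases j <;>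
    simp [Mmap, mser, Matrix.vecHead, Matrix.vecTail] <;> linarith

lemma mser_Mmap (p : Fin 3 → ℝ) : mser (Mmap p) = p := by
  funext i; fin_cases i <;> simp [Mmap, mser, Matrix.vecHead, Matrix.vecTail]

lemma mink_mser_sub (P Q : Mat3) (q : Fin 3 → ℝ) :
    mink (mser (P - Q)) q = mink (mser P) q - mink (mser Q) q := by
  simp [mink, mser]; ring

lemma mink_sub_right (p a b : Fin 3 → ℝ) :
    mink p (a - b) = mink p a - mink p b := by
  simp [mink]; ring

lemma so21_sub {A B : Mat3} (hA : IsSO21 A) (hB : IsSO21 B) : IsSO21 (A - B) := by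
  unfold IsSO21 at *
  rw [Matrix.transpose_sub, Matrix.sub_mul, Matrix.mul_sub,
    show Aᵀ * η3 - Bᵀ * η3 + (η3 * A - η3 * B)
      = (Aᵀ * η3 + η3 * A) - (Bᵀ * η3 + η3 * B) by noncomm_ring, hA, hB, sub_zero]

/-- Universal cofactor identity:  M(Ap)·A = η·adj(A)ᵀ·η·M(p). -/
lemma Mmap_mulVec_univ (A : Mat3) (p : Fin 3 → ℝ) :
    Mmap (A *ᵥ p) * A = η3 * (A.adjugate)ᵀ * η3 * Mmap p := by
  rw [Matrix.adjugate_fin_three]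
  ext i j
  fin_cases i <;> fin_cases j <;>
    (simp [Mmap, η3, Matrix.mul_apply, Matrix.mulVec, dotProduct,
      Fin.sum_univ_three, Matrix.vecHead, Matrix.vecTail]; ring)

lemma conj_Mmap {u : Mat3} (h : Lor u) (p : Fin 3 → ℝ) :
    u * Mmap p * u⁻¹ = Mmap (u *ᵥ p) := by
  have hadj : u.adjugate = u⁻¹ := by
    apply (Matrix.inv_eq_right_inv ?_).symm
    rw [Matrix.mul_adjugate, h.2, one_smul]
  have hadjT : η3 * (u.adjugate)ᵀ * η3 = u := by
    rw [hadj, h.inv_eq]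
    have hTT : (η3 * uᵀ * η3)ᵀ = η3 * u * η3 := by
      simp [Matrix.transpose_mul, η3_transpose, Matrix.mul_assoc]
    rw [hTT]
    calc η3 * (η3 * u * η3) * η3 = (η3 * η3) * u * (η3 * η3) := by noncomm_ring
      _ = u := by rw [η3_mul_η3, Matrix.one_mul, Matrix.mul_one]
  have huniv := Mmap_mulVec_univ u p
  rw [hadjT] at huniv
  calc u * Mmap p * u⁻¹ = Mmap (u *ᵥ p) * u * u⁻¹ := by rw [huniv]
    _ = Mmap (u *ᵥ p) * (u * u⁻¹) := by rw [Matrix.mul_assoc]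
    _ = Mmap (u *ᵥ p) := by rw [h.mul_inv, Matrix.mul_one]

lemma mink_invariant {u : Mat3} (h : uᵀ * η3 * u = η3) (a b : Fin 3 → ℝ) :
    mink (u *ᵥ a) (u *ᵥ b) = mink a b := by
  have h' : ∀ i j, (uᵀ * η3 * u) i j = η3 i j := fun i j => by rw [h]
  simp only [Matrix.mul_apply, Matrix.transpose_apply, η3, Matrix.diagonal,
    Fin.sum_univ_three, Matrix.of_apply] at h'
  have h00 := h' 0 0; have h01 := h' 0 1; have h02 := h' 0 2
  have h11 := h' 1 1; have h12 := h' 1 2; have h22 := h' 2 2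
  have h10 := h' 1 0; have h20 := h' 2 0; have h21 := h' 2 1
  simp at h00 h01 h02 h10 h11 h12 h20 h21 h22
  simp [mink, Matrix.mulVec, dotProduct, Fin.sum_univ_three]
  linear_combination a 0 * b 0 * h00 + a 0 * b 1 * h01 + a 0 * b 2 * h02 +
    a 1 * b 0 * h10 + a 1 * b 1 * h11 + a 1 * b 2 * h12 +
    a 2 * b 0 * h20 + a 2 * b 1 * h21 + a 2 * b 2 * h22

/-- The key pairing identity: for X ∈ so(2,1) and u ∈ SO(2,1),
    η(m(uXu⁻¹), q) = η(mX, u⁻¹q). -/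
lemma pairing_conj {u C : Mat3} (hu : Lor u) (hC : IsSO21 C) (q : Fin 3 → ℝ) :
    mink (mser (u * C * u⁻¹)) q = mink (mser C) (u⁻¹ *ᵥ q) := by
  set p := mser C with hp
  have hCM : C = Mmap p := so21_eq_Mmap hC
  rw [hCM, conj_Mmap hu, mser_Mmap]
  have huq : u *ᵥ (u⁻¹ *ᵥ q) = q := by
    rw [Matrix.mulVec_mulVec, hu.mul_inv, Matrix.one_mulVec]
  calc mink (u *ᵥ p) q = mink (u *ᵥ p) (u *ᵥ (u⁻¹ *ᵥ q)) := by rw [huq]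
    _ = mink p (u⁻¹ *ᵥ q) := mink_invariant hu.1 p (u⁻¹ *ᵥ q)

/-! #### Exponential facts -/

lemma X0_eta : η3 * Mmap (e3 0) * η3 = Mmap (e3 0) := by
  ext i j; fin_cases i <;> fin_cases j <;>
    simp [η3, Mmap, e3, Matrix.mul_apply, Fin.sum_univ_three, Pi.single_apply,
      Matrix.vecHead, Matrix.vecTail]

lemma X0_transpose : (Mmap (e3 0))ᵀ = -(Mmap (e3 0)) := by
  ext i j; fin_cases i <;> fin_cases j <;>
    simp [Mmap, e3, Pi.single_apply, Matrix.vecHead, Matrix.vecTail]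

lemma η3_isUnit : IsUnit (η3 : Mat3) := ⟨⟨η3, η3, η3_mul_η3, η3_mul_η3⟩, rfl⟩

lemma η3_inv : (η3 : Mat3)⁻¹ = η3 := Matrix.inv_eq_left_inv η3_mul_η3

lemma exp_comm_η3 (s : ℝ) : η3 * NormedSpace.exp (s • Mmap (e3 0)) =
    NormedSpace.exp (s • Mmap (e3 0)) * η3 := by
  have h := Matrix.exp_conj η3 (s • Mmap (e3 0)) η3_isUnit
  rw [η3_inv] at h
  have h2 : η3 * (s • Mmap (e3 0)) * η3 = s • Mmap (e3 0) := by
    rw [Matrix.mul_smul, Matrix.smul_mul, X0_eta]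
  rw [h2] at h
  calc η3 * NormedSpace.exp (s • Mmap (e3 0))
      = η3 * (η3 * NormedSpace.exp (s • Mmap (e3 0)) * η3) := by rw [← h]
    _ = (η3 * η3) * NormedSpace.exp (s • Mmap (e3 0)) * η3 := by noncomm_ring
    _ = NormedSpace.exp (s • Mmap (e3 0)) * η3 := by rw [η3_mul_η3, Matrix.one_mul]

lemma exp_mul_exp (s t : ℝ) :
    NormedSpace.exp (s • Mmap (e3 0)) * NormedSpace.exp (t • Mmap (e3 0)) =
      NormedSpace.exp ((s + t) • Mmap (e3 0)) := by
  rw [add_smul]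
  exact (Matrix.exp_add_of_commute _ _
    (((Commute.refl (Mmap (e3 0))).smul_left s).smul_right t)).symm

lemma exp_transpose' (s : ℝ) :
    (NormedSpace.exp (s • Mmap (e3 0)))ᵀ = NormedSpace.exp ((-s) • Mmap (e3 0)) := by
  rw [← Matrix.exp_transpose, Matrix.transpose_smul, X0_transpose, smul_neg, ← neg_smul]

lemma Lor_exp (s : ℝ) : Lor (NormedSpace.exp (s • Mmap (e3 0))) := by
  have horth : (NormedSpace.exp (s • Mmap (e3 0)))ᵀ * η3 *
      NormedSpace.exp (s • Mmap (e3 0)) = η3 := by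
    rw [exp_transpose' s]
    calc NormedSpace.exp ((-s) • Mmap (e3 0)) * η3 * NormedSpace.exp (s • Mmap (e3 0))
        = η3 * NormedSpace.exp ((-s) • Mmap (e3 0)) * NormedSpace.exp (s • Mmap (e3 0)) := by
          rw [exp_comm_η3]
      _ = η3 * (NormedSpace.exp ((-s) • Mmap (e3 0)) * NormedSpace.exp (s • Mmap (e3 0))) := by
          rw [Matrix.mul_assoc]
      _ = η3 := by
          rw [exp_mul_exp, neg_add_cancel, zero_smul, NormedSpace.exp_zero, Matrix.mul_one]
  refine ⟨horth, ?_⟩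
  have hsq : NormedSpace.exp (s • Mmap (e3 0)) =
      NormedSpace.exp ((s/2) • Mmap (e3 0)) * NormedSpace.exp ((s/2) • Mmap (e3 0)) := by
    rw [exp_mul_exp, add_halves]
  have hpos : 0 ≤ (NormedSpace.exp (s • Mmap (e3 0))).det := by
    rw [hsq, Matrix.det_mul]; exact mul_self_nonneg _
  have hone : (NormedSpace.exp (s • Mmap (e3 0))).det *
      (NormedSpace.exp (s • Mmap (e3 0))).det = 1 := by
    have hc := congrArg Matrix.det horth
    rw [Matrix.det_mul, Matrix.det_mul, Matrix.det_transpose] at hc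
    have hd : (η3 : Mat3).det = 1 := by simp [η3, Fin.prod_univ_three]
    rw [hd] at hc
    linarith [hc]
  rcases mul_self_eq_one_iff.mp hone with h | h
  · exact h
  · linarith


/-- Lemma 6.1, part 1: for genus 0 and n spinless particles the one-form Θ
takes the form (6.4) in the variables ũ_{Mᵢ}, x̃_{Mᵢ}. -/
theorem statement0 (n : ℕ) (hn : 1 ≤ n) (μ : ℕ → ℝ)
    (v : ℕ → ℝ → Matrix (Fin 3) (Fin 3) ℝ) (x : ℕ → ℝ → (Fin 3 → ℝ))
    (hv : ∀ i < n, Differentiable ℝ (v i))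
    (hvSO : ∀ i < n, ∀ ε, IsSOplus (v i ε))
    (hx : ∀ i < n, Differentiable ℝ (x i))
    (u : ℕ → ℝ → Matrix (Fin 3) (Fin 3) ℝ)
    (hu : ∀ i ε, u i ε = v i ε * NormedSpace.exp (-(μ i) • Mmap (e3 0)) * (v i ε)⁻¹)
    (j : ℕ → ℝ → (Fin 3 → ℝ))
    (hj : ∀ i ε, j i ε = (1 - (u i ε)⁻¹) *ᵥ x i ε)
    (ε : ℝ) :
    ∑ i ∈ Finset.range n,
      mink (mser (deriv (ordProd u i) ε * (ordProd u i ε)⁻¹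
        - deriv (v i) ε * (v i ε)⁻¹)) (j i ε)
    = ∑ i ∈ Finset.range n,
      mink (mser (deriv (ordProd u i) ε * (ordProd u i ε)⁻¹
        - deriv (ordProd u (i + 1)) ε * (ordProd u (i + 1) ε)⁻¹)) (x i ε) := by
  -- global structure facts
  have hLv : ∀ i < n, ∀ t, Lor (v i t) := fun i hi t =>
    ⟨(hvSO i hi t).1, (hvSO i hi t).2.1⟩
  have hLu : ∀ i < n, ∀ t, Lor (u i t) := by
    intro i hi t
    rw [hu i t]
    exact ((hLv i hi t).mul (Lor_exp _)).mul (hLv i hi t).inv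
  have hudiff : ∀ i < n, Differentiable ℝ (u i) := by
    intro i hi
    have hueq : u i = fun t => v i t * NormedSpace.exp (-(μ i) • Mmap (e3 0)) * (v i t)⁻¹ :=
      funext (hu i)
    rw [hueq]
    have hinv : Differentiable ℝ (fun t => (v i t)⁻¹) := fun t =>
      (hasDerivAt_lorInv (hLv i hi) ((hv i hi t).hasDerivAt)).differentiableAt
    exact ((hv i hi).matMul (differentiable_const _)).matMul hinv
  have hOP : ∀ k, k ≤ n → (∀ t, Lor (ordProd u k t)) ∧ Differentiable ℝ (ordProd u k) := by
    intro k
    induction k with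
    | zero => exact fun _ => ⟨fun _ => Lor.one, differentiable_const _⟩
    | succ k ih =>
      intro hk
      have hk' : k < n := hk
      obtain ⟨ihL, ihD⟩ := ih (le_of_lt hk')
      constructor
      · intro t
        exact (hLu k hk' t).mul (ihL t)
      · exact (hudiff k hk').matMul ihD
  -- termwise
  refine Finset.sum_congr rfl fun i hi => ?_
  have hi' : i < n := Finset.mem_range.mp hi
  obtain ⟨hLU, hDU⟩ := hOP i (le_of_lt hi')
  -- notation
  set V : Mat3 := v i ε with hV
  set V' : Mat3 := deriv (v i) ε with hV'
  set U : Mat3 := ordProd u i ε with hU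
  set U' : Mat3 := deriv (ordProd u i) ε with hU'
  set c : Mat3 := NormedSpace.exp (-(μ i) • Mmap (e3 0)) with hc
  set c' : Mat3 := NormedSpace.exp ((μ i) • Mmap (e3 0)) with hc'
  have hcc' : c * c' = 1 := by
    rw [hc, hc', exp_mul_exp, neg_add_cancel, zero_smul, NormedSpace.exp_zero]
  have hvd : HasDerivAt (v i) V' ε := (hv i hi' ε).hasDerivAt
  have hUd : HasDerivAt (ordProd u i) U' ε := (hDU ε).hasDerivAt
  have hvinvd : HasDerivAt (fun t => (v i t)⁻¹) (-(V⁻¹ * V' * V⁻¹)) ε :=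
    hasDerivAt_lorInv (hLv i hi') hvd
  -- derivative of u i
  have hud : HasDerivAt (u i) (V' * c * V⁻¹ + V * c * -(V⁻¹ * V' * V⁻¹)) ε := by
    have hueq : u i = fun t => v i t * c * (v i t)⁻¹ := funext (hu i)
    rw [hueq]
    have := (hvd.matMul (hasDerivAt_const ε c)).matMul hvinvd
    simpa using this
  set du : Mat3 := V' * c * V⁻¹ + V * c * -(V⁻¹ * V' * V⁻¹) with hdu
  -- derivative of ordProd u (i+1)
  have hOP1 : ordProd u (i + 1) = fun t => u i t * ordProd u i t := rfl
  have hU1d : HasDerivAt (ordProd u (i + 1)) (du * U + u i ε * U') ε := by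
    rw [hOP1]; exact hud.matMul hUd
  have hderiv1 : deriv (ordProd u (i + 1)) ε = du * U + u i ε * U' := hU1d.deriv
  have hOP1e : ordProd u (i + 1) ε = u i ε * U := rfl
  rw [hderiv1, hOP1e]
  -- abbreviations for the algebra
  have hLor_u : Lor (u i ε) := hLu i hi' ε
  have hLor_U : Lor U := hLU ε
  set uu : Mat3 := u i ε with huu
  -- inverse of uu
  have huuinv : uu⁻¹ = V * c' * V⁻¹ := by
    apply Matrix.inv_eq_right_inv
    rw [huu, hu i ε, ← hV, ← hc]
    have k2 : ∀ Z : Mat3, V⁻¹ * (V * Z) = Z := fun Z => by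
      rw [← Matrix.mul_assoc, (hLv i hi' ε).inv_mul, Matrix.one_mul]
    calc V * c * V⁻¹ * (V * c' * V⁻¹)
        = V * (c * (V⁻¹ * (V * (c' * V⁻¹)))) := by simp only [Matrix.mul_assoc]
      _ = V * (c * (c' * V⁻¹)) := by rw [k2]
      _ = V * ((c * c') * V⁻¹) := by rw [Matrix.mul_assoc]
      _ = V * V⁻¹ := by rw [hcc', Matrix.one_mul]
      _ = 1 := (hLv i hi' ε).mul_inv
  -- step 2: expand the (i+1) logarithmic derivative
  have hmulinv : (uu * U)⁻¹ = U⁻¹ * uu⁻¹ := Matrix.mul_inv_rev uu U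
  set A : Mat3 := U' * U⁻¹ with hA
  set B : Mat3 := V' * V⁻¹ with hB
  have hstep2 : (du * U + uu * U') * (uu * U)⁻¹ = du * uu⁻¹ + uu * A * uu⁻¹ := by
    rw [hmulinv, Matrix.add_mul]
    congr 1
    · calc du * U * (U⁻¹ * uu⁻¹) = du * (U * U⁻¹) * uu⁻¹ := by
            simp only [Matrix.mul_assoc]
        _ = du * uu⁻¹ := by rw [hLor_U.mul_inv, Matrix.mul_one]
    · rw [hA]; simp only [Matrix.mul_assoc]
  -- step 3: du * uu⁻¹ = B - uu * B * uu⁻¹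
  have hstep3 : du * uu⁻¹ = B - uu * B * uu⁻¹ := by
    have k1 : ∀ Z : Mat3, V⁻¹ * (V * Z) = Z := fun Z => by
      rw [← Matrix.mul_assoc, (hLv i hi' ε).inv_mul, Matrix.one_mul]
    have k3 : ∀ Z : Mat3, c * (c' * Z) = Z := fun Z => by
      rw [← Matrix.mul_assoc, hcc', Matrix.one_mul]
    have huue : uu = V * c * V⁻¹ := by rw [huu, hu i ε, ← hV, ← hc]
    rw [hdu, huuinv, huue, hB]
    have lhs1 : V' * c * V⁻¹ * (V * c' * V⁻¹) = V' * V⁻¹ := by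
      calc V' * c * V⁻¹ * (V * c' * V⁻¹) = V' * (c * (V⁻¹ * (V * (c' * V⁻¹)))) := by
            simp only [Matrix.mul_assoc]
        _ = V' * (c * (c' * V⁻¹)) := by rw [k1]
        _ = V' * V⁻¹ := by rw [k3]
    have lhs2 : V * c * -(V⁻¹ * V' * V⁻¹) * (V * c' * V⁻¹)
        = -(V * c * V⁻¹ * (V' * V⁻¹) * (V * c' * V⁻¹)) := by
      have e1 : V * c * -(V⁻¹ * V' * V⁻¹) * (V * c' * V⁻¹)
          = -(V * (c * (V⁻¹ * (V' * (c' * V⁻¹))))) := by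
        calc V * c * -(V⁻¹ * V' * V⁻¹) * (V * c' * V⁻¹)
            = -(V * (c * (V⁻¹ * (V' * (V⁻¹ * (V * (c' * V⁻¹))))))) := by
              simp only [Matrix.mul_neg, Matrix.neg_mul, Matrix.mul_assoc]
          _ = -(V * (c * (V⁻¹ * (V' * (c' * V⁻¹))))) := by rw [k1]
      have e2 : V * c * V⁻¹ * (V' * V⁻¹) * (V * c' * V⁻¹)
          = V * (c * (V⁻¹ * (V' * (c' * V⁻¹)))) := by
        calc V * c * V⁻¹ * (V' * V⁻¹) * (V * c' * V⁻¹)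
            = V * (c * (V⁻¹ * (V' * (V⁻¹ * (V * (c' * V⁻¹)))))) := by
              simp only [Matrix.mul_assoc]
          _ = V * (c * (V⁻¹ * (V' * (c' * V⁻¹)))) := by rw [k1]
      rw [e1, e2]
    rw [Matrix.add_mul, lhs1, lhs2, sub_eq_add_neg]
  -- combine
  have hrhs : A - (du * U + uu * U') * (uu * U)⁻¹ = (A - B) - uu * (A - B) * uu⁻¹ := by
    rw [hstep2, hstep3]; noncomm_ring
  have hsoA : IsSO21 A := so21_logDeriv hLU hUd
  have hsoB : IsSO21 B := so21_logDeriv (hLv i hi') hvd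
  have hsoC : IsSO21 (A - B) := so21_sub hsoA hsoB
  have hR : mink (mser (A - B - uu * (A - B) * uu⁻¹)) (x i ε)
      = mink (mser (A - B)) (j i ε) := by
    rw [mink_mser_sub (A - B) (uu * (A - B) * uu⁻¹), pairing_conj hLor_u hsoC,
      ← mink_sub_right, hj i ε, Matrix.sub_mulVec, Matrix.one_mulVec]
  rw [hrhs, hR]
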